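/- Let p, q, α, β, N, K, m be nonnegative integers with Kp ≥ mα and Kq ≥ mβ. Then for all z₁, z₂ ∈ ℂ: Re( Σ_{j=0}^{m} [1/(j!·(m−j)!)] · z₁^{Kp−jα} z₂^{Kq−jβ} · conj(z₁)^{Kp−(m−j)α+Np} · conj(z₂)^{Kq−(m−j)β+Nq} ) = (2^m/m!) · Re((z₁^p z₂^q)^N) · |z₁|^{2(Kp−mα)} · |z₂|^{2(Kq−mβ)} · (Re(z₁^α z₂^β))^m. -/

import Mathlib

open Complex Finset

lemma sum_inv_factorials_pow (m : ℕ) (x y : ℂ) :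
    ∑ j ∈ Finset.range (m + 1),
      ((j.factorial * (m - j).factorial : ℂ))⁻¹ * x ^ (m - j) * y ^ j
      = (x + y) ^ m / (m.factorial : ℂ) := by
  rw [add_comm x y, add_pow, Finset.sum_div]
  refine Finset.sum_congr rfl fun j hj => ?_
  have hjm : j ≤ m := Nat.lt_succ_iff.mp (Finset.mem_range.mp hj)
  have hC : ((m.choose j : ℂ)) * j.factorial * (m - j).factorial = m.factorial := by
    exact_mod_cast congrArg (Nat.cast : ℕ → ℂ)
      (Nat.choose_mul_factorial_mul_factorial hjm)
  have hj0 : (j.factorial : ℂ) ≠ 0 := Nat.cast_ne_zero.mpr j.factorial_ne_zero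
  have hmj0 : ((m - j).factorial : ℂ) ≠ 0 := Nat.cast_ne_zero.mpr (m - j).factorial_ne_zero
  have hm0 : (m.factorial : ℂ) ≠ 0 := Nat.cast_ne_zero.mpr m.factorial_ne_zero
  field_simp
  rw [← hC]
  ring

/-- evaluation of the chain sum of a pure `X`-pair for the monomial field
`X = i z₁^α z₂^β (q z₁∂_{z₁} − p z₂∂_{z₂})`:
`Re( Σ_{j=0}^{m} z₁^{Kp−jα} z₂^{Kq−jβ} conj(z₁)^{Kp−(m−j)α+Np} conj(z₂)^{Kq−(m−j)β+Nq} / (j!(m−j)!) )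
  = (2^m/m!)·Re((z₁^p z₂^q)^N)·|z₁|^{2(Kp−mα)}·|z₂|^{2(Kq−mβ)}·(Re(z₁^α z₂^β))^m`. -/
theorem stmt_9 (p q a b N K m : ℕ) (h1 : m * a ≤ K * p) (h2 : m * b ≤ K * q)
    (z1 z2 : ℂ) :
    (∑ j ∈ Finset.range (m + 1),
        ((j.factorial * (m - j).factorial : ℂ))⁻¹ *
          z1 ^ (K * p - j * a) * z2 ^ (K * q - j * b) *
          (starRingEnd ℂ z1) ^ (K * p - (m - j) * a + N * p) *
          (starRingEnd ℂ z2) ^ (K * q - (m - j) * b + N * q)).re =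
      (2 : ℝ) ^ m / (m.factorial : ℝ) *
        ((z1 ^ p * z2 ^ q) ^ N).re *
        ‖z1‖ ^ (2 * (K * p - m * a)) *
        ‖z2‖ ^ (2 * (K * q - m * b)) *
        ((z1 ^ a * z2 ^ b).re) ^ m := by
  set A := K * p - m * a with hA
  set B := K * q - m * b with hB
  have key : ∀ j ∈ Finset.range (m + 1),
      ((j.factorial * (m - j).factorial : ℂ))⁻¹ *
          z1 ^ (K * p - j * a) * z2 ^ (K * q - j * b) *
          (starRingEnd ℂ z1) ^ (K * p - (m - j) * a + N * p) *
          (starRingEnd ℂ z2) ^ (K * q - (m - j) * b + N * q)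
      = ((z1 * starRingEnd ℂ z1) ^ A * (z2 * starRingEnd ℂ z2) ^ B *
          (starRingEnd ℂ ((z1 ^ p * z2 ^ q) ^ N))) *
        (((j.factorial * (m - j).factorial : ℂ))⁻¹ *
          (z1 ^ a * z2 ^ b) ^ (m - j) * (starRingEnd ℂ (z1 ^ a * z2 ^ b)) ^ j) := by
    intro j hj
    have hjm : j ≤ m := Nat.lt_succ_iff.mp (Finset.mem_range.mp hj)
    have ha3 : j * a + (m - j) * a = m * a := by
      rw [← Nat.add_mul, Nat.add_sub_cancel' hjm]
    have hb3 : j * b + (m - j) * b = m * b := by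
      rw [← Nat.add_mul, Nat.add_sub_cancel' hjm]
    have e1 : K * p - j * a = A + (m - j) * a := by omega
    have e2 : K * q - j * b = B + (m - j) * b := by omega
    have e3 : K * p - (m - j) * a + N * p = A + j * a + N * p := by omega
    have e4 : K * q - (m - j) * b + N * q = B + j * b + N * q := by omega
    rw [e1, e2, e3, e4]
    simp only [map_pow, map_mul, pow_add, mul_pow, pow_mul]
    ring
  have hsum : (∑ j ∈ Finset.range (m + 1),
        ((j.factorial * (m - j).factorial : ℂ))⁻¹ *
          z1 ^ (K * p - j * a) * z2 ^ (K * q - j * b) *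
          (starRingEnd ℂ z1) ^ (K * p - (m - j) * a + N * p) *
          (starRingEnd ℂ z2) ^ (K * q - (m - j) * b + N * q))
      = ((Complex.normSq z1 ^ A * Complex.normSq z2 ^ B *
            ((2 * (z1 ^ a * z2 ^ b).re) ^ m / m.factorial) : ℝ) : ℂ) *
          (starRingEnd ℂ ((z1 ^ p * z2 ^ q) ^ N)) := by
    rw [Finset.sum_congr rfl key, ← Finset.mul_sum, sum_inv_factorials_pow,
      Complex.mul_conj, Complex.mul_conj, Complex.add_conj]
    push_cast
    ring
  rw [hsum, Complex.re_ofReal_mul, Complex.conj_re,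
    Complex.normSq_eq_norm_sq, Complex.normSq_eq_norm_sq, ← pow_mul, ← pow_mul, mul_pow]
  ring
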